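/- arXiv:2411.13137 — 2 statements merged into one kernel-verified Lean document; each statement's English description precedes it below -/
import Mathlib

section
/- Iterated smoothing converges to the kernel projection: for L symmetric PSD, 0 < α < 1, and P = α(αI + (1−α)L)⁻¹, the iterates Pᵏx converge as k → ∞ to the orthogonal projection of x onto the kernel of L. -/
open Matrix Filter
open scoped RealInnerProductSpace

/-- Iterated smoothing converges to the kernel projection: for L symmetric PSD,
0 < α < 1, and P = α(αI + (1−α)L)⁻¹, the iterates Pᵏx converge to the
orthogonal projection of x onto ker L. -/
theorem iterated_smoothing_tendsto_kernel_projection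
    {N : ℕ} (L : Matrix (Fin N) (Fin N) ℝ) (hL : L.PosSemidef)
    (α : ℝ) (hα : 0 < α) (hα1 : α < 1)
    (P : Matrix (Fin N) (Fin N) ℝ)
    (hP : P = α • (α • (1 : Matrix (Fin N) (Fin N) ℝ) + (1 - α) • L)⁻¹)
    (x : EuclideanSpace ℝ (Fin N)) :
    Tendsto (fun k : ℕ => Matrix.toEuclideanLin (P ^ k) x) atTop
      (nhds ((Submodule.orthogonalProjectionOnto (LinearMap.ker (Matrix.toEuclideanLin L)) x :
        EuclideanSpace ℝ (Fin N)))) := by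
  classical
  set T : EuclideanSpace ℝ (Fin N) →ₗ[ℝ] EuclideanSpace ℝ (Fin N) := Matrix.toEuclideanLin L
  have hT : T.IsSymmetric := Matrix.isHermitian_iff_isSymmetric.mp hL.isHermitian
  have hn : Module.finrank ℝ (EuclideanSpace ℝ (Fin N)) = N := finrank_euclideanSpace_fin
  set b := hT.eigenvectorBasis hn with hb
  set μ : Fin N → ℝ := hT.eigenvalues hn with hμdef
  have hTb : ∀ i, T (b i) = μ i • b i := fun i => by
    exact_mod_cast hT.apply_eigenvectorBasis hn i
  -- nonneg quadratic form
  have hTnn : ∀ v : EuclideanSpace ℝ (Fin N), 0 ≤ ⟪v, T v⟫ := by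
    intro v
    have := hL.dotProduct_mulVec_nonneg ((WithLp.equiv 2 (Fin N → ℝ)) v)
    simpa [T, Matrix.toEuclideanLin_apply, PiLp.inner_apply, dotProduct,
      RCLike.inner_apply, mul_comm] using this
  have hμnn : ∀ i, 0 ≤ μ i := by
    intro i
    have h1 : ⟪b i, T (b i)⟫ = μ i := by
      rw [hTb i, real_inner_smul_right, real_inner_self_eq_norm_sq, b.orthonormal.1 i]
      simp
    linarith [hTnn (b i)]
  -- the matrix M
  set M : Matrix (Fin N) (Fin N) ℝ := α • (1 : Matrix (Fin N) (Fin N) ℝ) + (1 - α) • L with hM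
  have hαI : (α • (1 : Matrix (Fin N) (Fin N) ℝ)).PosDef := by
    refine Matrix.PosDef.of_dotProduct_mulVec_pos ?_ ?_
    · simp [Matrix.IsHermitian, Matrix.conjTranspose_smul]
    · intro y hy
      have : star y ⬝ᵥ (α • (1 : Matrix (Fin N) (Fin N) ℝ)) *ᵥ y = α * (star y ⬝ᵥ y) := by
        simp [Matrix.smul_mulVec, Matrix.one_mulVec, dotProduct_smul]
      rw [this]
      have h2 : 0 < star y ⬝ᵥ y := by
        simpa using Matrix.dotProduct_star_self_pos_iff.mpr hy
      positivity
  have hLs : ((1 - α) • L).PosSemidef := by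
    refine Matrix.PosSemidef.of_dotProduct_mulVec_nonneg ?_ (fun y => ?_)
    · simpa [Matrix.IsHermitian, Matrix.conjTranspose_smul] using
        congrArg (fun A => (1 - α) • A) hL.isHermitian
    · have := hL.dotProduct_mulVec_nonneg y
      have h1α : (0:ℝ) ≤ 1 - α := by linarith
      simp only [Matrix.smul_mulVec, dotProduct_smul, smul_eq_mul]
      positivity
  have hMpd : M.PosDef := hαI.add_posSemidef hLs
  have hMunit : IsUnit M.det := (Matrix.isUnit_iff_isUnit_det M).mp hMpd.isUnit
  have hPM : P * M = α • (1 : Matrix (Fin N) (Fin N) ℝ) := by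
    rw [hP, Matrix.smul_mul, Matrix.nonsing_inv_mul M hMunit]
  -- pointwise multiplication
  have hmul : ∀ (A B : Matrix (Fin N) (Fin N) ℝ) (v : EuclideanSpace ℝ (Fin N)),
      Matrix.toEuclideanLin (A * B) v = Matrix.toEuclideanLin A (Matrix.toEuclideanLin B v) := by
    intro A B v
    simp [Matrix.toEuclideanLin_apply, Matrix.mulVec_mulVec]
  -- action of M on eigenvectors
  set d : Fin N → ℝ := fun i => α + (1 - α) * μ i with hd
  have hdpos : ∀ i, 0 < d i := by
    intro i
    have := hμnn i
    have h1α : (0:ℝ) ≤ 1 - α := by linarith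
    have : 0 ≤ (1 - α) * μ i := by positivity
    simp only [hd]
    linarith
  have hMb : ∀ i, Matrix.toEuclideanLin M (b i) = d i • b i := by
    intro i
    have : Matrix.toEuclideanLin M (b i)
        = α • (Matrix.toEuclideanLin 1 (b i)) + (1 - α) • T (b i) := by
      simp [hM, T, _root_.map_add, _root_.map_smul]
    rw [this, hTb i]
    have h1 : Matrix.toEuclideanLin (1 : Matrix (Fin N) (Fin N) ℝ) (b i) = b i := by
      simp [Matrix.toEuclideanLin_apply]
    rw [h1, smul_smul, hd, add_smul]
  set c : Fin N → ℝ := fun i => α / d i with hc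
  have hPb : ∀ i, Matrix.toEuclideanLin P (b i) = c i • b i := by
    intro i
    have h1 : Matrix.toEuclideanLin P (d i • b i) = α • b i := by
      rw [← hMb i, ← hmul, hPM]
      simp [Matrix.toEuclideanLin_apply]
    rw [LinearMap.map_smul] at h1
    have hdne := (hdpos i).ne'
    have := congrArg (fun v => (d i)⁻¹ • v) h1
    simp only [smul_smul, inv_mul_cancel₀ hdne, one_smul] at this
    rw [this]
    simp [hc, div_eq_inv_mul]
  -- iterates
  set r : Fin N → ℝ := fun i => b.repr x i with hr
  have hiter : ∀ k : ℕ, Matrix.toEuclideanLin (P ^ k) x = ∑ i, (c i ^ k * r i) • b i := by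
    intro k
    induction k with
    | zero =>
      simp only [pow_zero]
      have : Matrix.toEuclideanLin (1 : Matrix (Fin N) (Fin N) ℝ) x = x := by
        simp [Matrix.toEuclideanLin_apply]
      rw [this]
      simpa [hr] using (b.sum_repr x).symm
    | succ k ih =>
      rw [pow_succ', hmul, ih, map_sum]
      refine Finset.sum_congr rfl fun i _ => ?_
      rw [LinearMap.map_smul, hPb i, smul_smul, pow_succ]
      ring_nf
  -- properties of c
  have hceq1 : ∀ i, μ i = 0 → c i = 1 := by
    intro i h
    simp [hc, hd, h, div_self hα.ne']
  have hclt1 : ∀ i, μ i ≠ 0 → 0 ≤ c i ∧ c i < 1 := by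
    intro i h
    have hμpos : 0 < μ i := lt_of_le_of_ne (hμnn i) (Ne.symm h)
    have h1α : (0:ℝ) < 1 - α := by linarith
    have hdgt : α < d i := by
      have : 0 < (1 - α) * μ i := by positivity
      simp only [hd]; linarith
    constructor
    · exact le_of_lt (div_pos hα (hdpos i))
    · rw [hc, div_lt_one (hdpos i)]; exact hdgt
  -- the limit
  set y : EuclideanSpace ℝ (Fin N) := ∑ i, (if μ i = 0 then r i else 0) • b i with hy
  have hTend : Tendsto (fun k : ℕ => Matrix.toEuclideanLin (P ^ k) x) atTop (nhds y) := by
    simp only [hiter, hy]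
    refine tendsto_finset_sum _ fun i _ => ?_
    by_cases h : μ i = 0
    · simp only [h, if_true, hceq1 i h, one_pow, one_mul]
      exact tendsto_const_nhds
    · obtain ⟨h0, h1⟩ := hclt1 i h
      have hc0 : Tendsto (fun k : ℕ => c i ^ k) atTop (nhds 0) :=
        tendsto_pow_atTop_nhds_zero_of_lt_one h0 h1
      have : Tendsto (fun k : ℕ => (c i ^ k * r i) • b i) atTop (nhds ((0 * r i) • b i)) := by
        exact ((hc0.mul_const (r i)).smul_const (b i))
      simpa [h] using this
  -- identify y with the projection
  have hyproj : (Submodule.orthogonalProjectionOnto (LinearMap.ker T) x : EuclideanSpace ℝ (Fin N)) = y := by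
    apply Submodule.eq_starProjection_of_mem_of_inner_eq_zero
    · -- y ∈ ker T
      rw [LinearMap.mem_ker, hy, map_sum]
      refine Finset.sum_eq_zero fun i _ => ?_
      by_cases h : μ i = 0
      · rw [if_pos h, LinearMap.map_smul, hTb i, h]; simp
      · simp [h]
    · intro w hw
      rw [LinearMap.mem_ker] at hw
      have hbw : ∀ i, μ i ≠ 0 → ⟪b i, w⟫ = 0 := by
        intro i h
        have h1 : ⟪T (b i), w⟫ = ⟪b i, T w⟫ := hT (b i) w
        rw [hw, hTb i, real_inner_smul_left, inner_zero_right] at h1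
        exact (mul_eq_zero.mp h1).resolve_left h
      have hx : x = ∑ i, r i • b i := by simpa [hr] using (b.sum_repr x).symm
      rw [hx, hy, ← Finset.sum_sub_distrib]
      rw [sum_inner]
      refine Finset.sum_eq_zero fun i _ => ?_
      rw [← sub_smul, real_inner_smul_left]
      by_cases h : μ i = 0
      · simp [h]
      · rw [hbw i h]; ring
  rw [hyproj]
  exact hTend
end

section
/- Gradient descent with step size 1/2 on the GSD objective decreases the objective monotonically: for f(H) = α‖H−X‖_F² + (1−α)Tr(HᵀLH) with A symmetric with spectral norm ≤ 1, L = I − A, and 0 < α ≤ 1, the APPNP update H⁺ = (1−α)AH + αX satisfies f(H⁺) ≤ f(H) for every H. -/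
open Matrix

lemma psd_trace_nonneg {n : ℕ} {S : Matrix (Fin n) (Fin n) ℝ} (hS : S.PosSemidef) :
    0 ≤ S.trace := by
  rw [Matrix.trace]
  refine Finset.sum_nonneg fun i _ => ?_
  exact hS.diag_nonneg

lemma quad_expand {n m : ℕ} (S : Matrix (Fin n) (Fin n) ℝ) (hS : Sᵀ = S)
    (P Q : Matrix (Fin n) (Fin m) ℝ) :
    ((P - Q)ᵀ * S * (P - Q)).trace
      = (Pᵀ * S * P).trace - 2 * (Qᵀ * S * P).trace + (Qᵀ * S * Q).trace := by
  have hPQ : (Pᵀ * S * Q).trace = (Qᵀ * S * P).trace := by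
    rw [← Matrix.trace_transpose (Pᵀ * S * Q)]
    simp [Matrix.transpose_mul, hS, Matrix.mul_assoc]
  simp only [Matrix.transpose_sub, Matrix.sub_mul, Matrix.mul_sub, Matrix.trace_sub]
  rw [hPQ]; ring

/-- The APPNP update H⁺ = (1−α)AH + αX (a gradient step of size 1/2) decreases
the GSD objective f(H) = α‖H−X‖_F² + (1−α)Tr(HᵀLH) monotonically, for A
symmetric with spectral norm ≤ 1 (eigenvalues in [−1,1], i.e. I−A and I+A PSD),
L = I − A, and 0 < α ≤ 1. -/
theorem appnp_gradient_step_decreases_objective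
    {N M : ℕ} (A : Matrix (Fin N) (Fin N) ℝ) (hA : Aᵀ = A)
    (hA1 : ((1 : Matrix (Fin N) (Fin N) ℝ) - A).PosSemidef)
    (hA2 : ((1 : Matrix (Fin N) (Fin N) ℝ) + A).PosSemidef)
    (L : Matrix (Fin N) (Fin N) ℝ) (hLdef : L = 1 - A)
    (α : ℝ) (hα : 0 < α) (hα1 : α ≤ 1)
    (X : Matrix (Fin N) (Fin M) ℝ)
    (f : Matrix (Fin N) (Fin M) ℝ → ℝ)
    (hf : ∀ H, f H = α * ((H - X)ᵀ * (H - X)).trace + (1 - α) * (Hᵀ * L * H).trace) :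
    ∀ H : Matrix (Fin N) (Fin M) ℝ, f ((1 - α) • (A * H) + α • X) ≤ f H := by
  intro H
  have hLsym : Lᵀ = L := by rw [hLdef]; simp [Matrix.transpose_sub, hA]
  -- G = half-gradient
  set G : Matrix (Fin N) (Fin M) ℝ := H - (1 - α) • (A * H) - α • X with hG
  have hstep : (1 - α) • (A * H) + α • X = H - G := by
    rw [hG]; abel
  -- key algebraic fact:  α•(H−X) + (1−α)•(L*H) = G
  have hGrad : α • (H - X) + (1 - α) • (L * H) = G := by
    rw [hG, hLdef]
    simp only [Matrix.sub_mul, Matrix.one_mul, smul_sub]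
    module
  rw [hstep, hf, hf]
  -- expand the two quadratic terms
  have h1 : ((H - G - X)ᵀ * (H - G - X)).trace
      = ((H - X)ᵀ * (H - X)).trace - 2 * (Gᵀ * (H - X)).trace + (Gᵀ * G).trace := by
    have := quad_expand (1 : Matrix (Fin N) (Fin N) ℝ) (by simp) (H - X) G
    simpa [Matrix.mul_one, Matrix.one_mul, sub_right_comm] using this
  have h2 : ((H - G)ᵀ * L * (H - G)).trace
      = (Hᵀ * L * H).trace - 2 * (Gᵀ * L * H).trace + (Gᵀ * L * G).trace :=
    quad_expand L hLsym H G
  rw [h1, h2]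
  -- the cross terms combine to 2 Tr(GᵀG)
  have hcross : α * (Gᵀ * (H - X)).trace + (1 - α) * (Gᵀ * L * H).trace
      = (Gᵀ * G).trace := by
    have : (Gᵀ * (α • (H - X) + (1 - α) • (L * H))).trace = (Gᵀ * G).trace := by
      rw [hGrad]
    calc α * (Gᵀ * (H - X)).trace + (1 - α) * (Gᵀ * L * H).trace
        = (Gᵀ * (α • (H - X) + (1 - α) • (L * H))).trace := by
          simp [Matrix.mul_add, Matrix.mul_smul, Matrix.trace_add, Matrix.trace_smul,
            Matrix.mul_assoc]
      _ = (Gᵀ * G).trace := this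
  -- nonnegativity of the decrease
  have hGG : 0 ≤ (Gᵀ * G).trace := by
    have h := Matrix.posSemidef_conjTranspose_mul_self G
    rw [Matrix.conjTranspose_eq_transpose_of_trivial] at h
    exact psd_trace_nonneg h
  have hGLG : (Gᵀ * L * G).trace ≤ 2 * (Gᵀ * G).trace := by
    have h := hA2.conjTranspose_mul_mul_same G
    rw [Matrix.conjTranspose_eq_transpose_of_trivial] at h
    have htr := psd_trace_nonneg h
    have hexp : (Gᵀ * (1 + A) * G).trace
        = 2 * (Gᵀ * G).trace - (Gᵀ * L * G).trace := by
      rw [hLdef]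
      simp only [Matrix.mul_add, Matrix.add_mul, Matrix.mul_sub, Matrix.sub_mul,
        Matrix.mul_one, Matrix.one_mul, Matrix.trace_add, Matrix.trace_sub]
      ring
    linarith [hexp ▸ htr]
  have h3 : (1 - α) * (Gᵀ * L * G).trace ≤ (1 - α) * (2 * (Gᵀ * G).trace) :=
    mul_le_mul_of_nonneg_left hGLG (by linarith)
  have h4 : 0 ≤ α * (Gᵀ * G).trace := mul_nonneg hα.le hGG
  nlinarith [hcross, h3, h4]
end
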